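/- Let A ⊂ B be a partially cleft H-extension with maps γ, γ': H → B. Then γ * γ' * γ = γ (convolution product), and consequently γ*γ' and γ'*γ are idempotents in the convolution algebra Hom(H,B); moreover γ*γ' is a central idempotent in Hom(H,A). -/
import Mathlib


open TensorProduct

noncomputable section

/-- Convolution product of linear maps `H → B`. -/
def conv {k H B : Type} [CommRing k] [Ring H] [HopfAlgebra k H]
    [Ring B] [Algebra k B] (f g : H →ₗ[k] B) : H →ₗ[k] B :=
  LinearMap.mul' k B ∘ₗ TensorProduct.map f g ∘ₗ
    (Coalgebra.comul : H →ₗ[k] H ⊗[k] H)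

/-- The comultiplication of the tensor product coalgebra `H ⊗ H`. -/
def comulTwo {k H : Type} [CommRing k] [Ring H] [HopfAlgebra k H] :
    H ⊗[k] H →ₗ[k] (H ⊗[k] H) ⊗[k] (H ⊗[k] H) :=
  (TensorProduct.tensorTensorTensorComm k H H H H).toLinearMap ∘ₗ
    TensorProduct.map (Coalgebra.comul (R := k)) (Coalgebra.comul (R := k))

/-- Convolution product in `Hom(H ⊗ H, B)`. -/
def conv2 {k H B : Type} [CommRing k] [Ring H] [HopfAlgebra k H]
    [Ring B] [Algebra k B] (f g : H ⊗[k] H →ₗ[k] B) : H ⊗[k] H →ₗ[k] B :=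
  LinearMap.mul' k B ∘ₗ TensorProduct.map f g ∘ₗ comulTwo

/-- `A = B^{co H} ⊆ B` is a partially cleft `H`-extension via the pair
`(γ, γ')` (Definition 5.1). -/
structure IsPartiallyCleft {k H B : Type} [CommRing k] [Ring H]
    [HopfAlgebra k H] [Ring B] [Algebra k B]
    (ρ : B →ₗ[k] B ⊗[k] H) (γ γ' : H →ₗ[k] B) : Prop where
  /-- (i) `γ(1) = 1` -/
  map_one : γ 1 = 1
  /-- (ii) `γ` is a comodule map -/
  comod : ∀ h : H, ρ (γ h) =
    (TensorProduct.map γ LinearMap.id) (Coalgebra.comul (R := k) h)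
  /-- (ii) `ρ ∘ γ' = (γ' ⊗ S) ∘ Δᶜᵒᵖ` -/
  comod' : ∀ h : H, ρ (γ' h) =
    (TensorProduct.map γ' (HopfAlgebra.antipode (R := k)))
      ((TensorProduct.comm k H H) (Coalgebra.comul (R := k) h))
  /-- `(γ * γ') ∘ M` takes values in the coinvariants -/
  conv_coinv : ∀ h : H, ρ (conv γ γ' h) = conv γ γ' h ⊗ₜ[k] 1
  /-- (iii) `(γ * γ') ∘ M` is central in `Hom(H ⊗ H, A)` -/
  conv_central : ∀ T : H ⊗[k] H →ₗ[k] B, (∀ x, ρ (T x) = T x ⊗ₜ[k] 1) →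
    conv2 (conv γ γ' ∘ₗ LinearMap.mul' k H) T =
      conv2 T (conv γ γ' ∘ₗ LinearMap.mul' k H)
  /-- (iii) each `(γ' * γ)(h)` commutes with the coinvariants -/
  conv'_comm : ∀ (h : H) (a : B), ρ a = a ⊗ₜ[k] 1 →
    conv γ' γ h * a = a * conv γ' γ h
  /-- (iv) `Σ b₀ γ'(b₁) γ(b₂) = b` -/
  expand : ∀ b : B,
    (LinearMap.mul' k B) ((LinearMap.lTensor B (conv γ' γ)) (ρ b)) = b
  /-- (v) `γ(h) e_l = Σ e_{h₁ l} γ(h₂)` -/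
  five : ∀ (h l : H) (ι : Type) (s : Finset ι) (h1 h2 : ι → H),
    Coalgebra.comul (R := k) h = ∑ i ∈ s, h1 i ⊗ₜ[k] h2 i →
    γ h * conv γ γ' l = ∑ i ∈ s, conv γ γ' (h1 i * l) * γ (h2 i)
  /-- (vi) `γ'(l) ẽ_h = Σ ẽ_{h l₁} γ'(l₂)` -/
  six : ∀ (h l : H) (κ : Type) (t : Finset κ) (l1 l2 : κ → H),
    Coalgebra.comul (R := k) l = ∑ j ∈ t, l1 j ⊗ₜ[k] l2 j →
    γ' l * conv γ' γ h = ∑ j ∈ t, conv γ' γ (h * l1 j) * γ' (l2 j)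
  /-- (vii) `Σ γ(h l₁) ẽ_{l₂} = Σ e_{h₁} γ(h₂ l)` -/
  seven : ∀ (h l : H) (ι κ : Type) (s : Finset ι) (t : Finset κ)
    (h1 h2 : ι → H) (l1 l2 : κ → H),
    Coalgebra.comul (R := k) h = ∑ i ∈ s, h1 i ⊗ₜ[k] h2 i →
    Coalgebra.comul (R := k) l = ∑ j ∈ t, l1 j ⊗ₜ[k] l2 j →
    ∑ j ∈ t, γ (h * l1 j) * conv γ' γ (l2 j) =
      ∑ i ∈ s, conv γ γ' (h1 i) * γ (h2 i * l)

section Aux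
variable {k H B : Type} [CommRing k] [Ring H] [HopfAlgebra k H]
  [Ring B] [Algebra k B]

lemma conv_apply_sum (f g : H →ₗ[k] B) (h : H) {ι : Type*} (s : Finset ι)
    (h1 h2 : ι → H) (hc : Coalgebra.comul (R := k) h = ∑ i ∈ s, h1 i ⊗ₜ[k] h2 i) :
    conv f g h = ∑ i ∈ s, f (h1 i) * g (h2 i) := by
  simp [conv, hc, LinearMap.mul'_apply]

lemma comul_one' : Coalgebra.comul (R := k) (1 : H) = (1:H) ⊗ₜ[k] (1:H) := by
  rw [Bialgebra.comul_one, Algebra.TensorProduct.one_def]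

lemma comul_one_sum : Coalgebra.comul (R := k) (1 : H) =
    ∑ _i ∈ (Finset.univ : Finset Unit), (1:H) ⊗ₜ[k] (1:H) := by
  rw [comul_one']; simp

lemma conv_one_apply (f g : H →ₗ[k] B) : conv f g 1 = f 1 * g 1 := by
  simp only [conv, LinearMap.comp_apply, comul_one', TensorProduct.map_tmul,
    LinearMap.mul'_apply]

lemma conv_assoc (f g h : H →ₗ[k] B) : conv (conv f g) h = conv f (conv g h) := by
  set L : (H ⊗[k] H) ⊗[k] H →ₗ[k] B :=
    LinearMap.mul' k B ∘ₗ
      TensorProduct.map (LinearMap.mul' k B ∘ₗ TensorProduct.map f g) h with hL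
  set R : H ⊗[k] (H ⊗[k] H) →ₗ[k] B :=
    LinearMap.mul' k B ∘ₗ
      TensorProduct.map f (LinearMap.mul' k B ∘ₗ TensorProduct.map g h) with hR
  have h1 : (LinearMap.mul' k B ∘ₗ TensorProduct.map (conv f g) h : H ⊗[k] H →ₗ[k] B)
      = L ∘ₗ (Coalgebra.comul (R := k)).rTensor H := by
    apply TensorProduct.ext'
    intro a c
    simp [hL, conv, LinearMap.mul'_apply]
  have h2 : (LinearMap.mul' k B ∘ₗ TensorProduct.map f (conv g h) : H ⊗[k] H →ₗ[k] B)
      = R ∘ₗ (Coalgebra.comul (R := k)).lTensor H := by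
    apply TensorProduct.ext'
    intro a c
    simp [hR, conv, LinearMap.mul'_apply]
  have h3 : L = R ∘ₗ (TensorProduct.assoc k H H H).toLinearMap := by
    apply TensorProduct.ext_threefold
    intro a b c
    simp [hL, hR, LinearMap.mul'_apply, mul_assoc]
  ext x
  have hco := Coalgebra.coassoc_apply (R := k) x
  calc conv (conv f g) h x
      = (LinearMap.mul' k B ∘ₗ TensorProduct.map (conv f g) h)
          (Coalgebra.comul (R := k) x) := rfl
    _ = L ((Coalgebra.comul (R := k)).rTensor H (Coalgebra.comul (R := k) x)) := by
          rw [h1]; rfl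
    _ = R ((TensorProduct.assoc k H H H)
          ((Coalgebra.comul (R := k)).rTensor H (Coalgebra.comul (R := k) x))) := by
          rw [h3]; rfl
    _ = R ((Coalgebra.comul (R := k)).lTensor H (Coalgebra.comul (R := k) x)) := by
          rw [hco]
    _ = conv f (conv g h) x := by rw [← LinearMap.comp_apply, ← h2]; rfl

end Aux

/-- For a partially cleft extension one has `γ * γ' * γ = γ` (equation (31));
consequently `γ * γ'` and `γ' * γ` are convolution idempotents, and `γ * γ'`
is a central idempotent in the convolution algebra `Hom(H, A)`,
`A = B^{co H}` (Remark 5.4). -/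
theorem partiallyCleft_conv_identities
    {k H B : Type} [CommRing k] [Ring H] [HopfAlgebra k H]
    [Ring B] [Algebra k B]
    (ρ : B →ₗ[k] B ⊗[k] H)
    (hρ_one : ρ 1 = 1 ⊗ₜ[k] 1)
    (hρ_mul : ∀ x y : B, ρ (x * y) = ρ x * ρ y)
    (hρ_coassoc : ∀ x : B,
      (TensorProduct.assoc k B H H) ((LinearMap.rTensor H ρ) (ρ x)) =
        (LinearMap.lTensor B (Coalgebra.comul (R := k))) (ρ x))
    (hρ_counit : ∀ x : B,
      (TensorProduct.rid k B)
        ((LinearMap.lTensor B (Coalgebra.counit (R := k))) (ρ x)) = x)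
    (γ γ' : H →ₗ[k] B)
    (hcleft : IsPartiallyCleft ρ γ γ') :
    conv γ (conv γ' γ) = γ ∧
    conv (conv γ γ') (conv γ γ') = conv γ γ' ∧
    conv (conv γ' γ) (conv γ' γ) = conv γ' γ ∧
    (∀ h : H, ρ (conv γ γ' h) = conv γ γ' h ⊗ₜ[k] 1) ∧
    (∀ T : H →ₗ[k] B, (∀ h : H, ρ (T h) = T h ⊗ₜ[k] 1) →
      conv (conv γ γ') T = conv T (conv γ γ')) := by
  -- γ'(1) = 1
  have hγ'1 : γ' 1 = 1 := by
    have h0 := hcleft.expand 1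
    rw [hρ_one] at h0
    simp only [LinearMap.lTensor_tmul, LinearMap.mul'_apply, one_mul] at h0
    rwa [conv_one_apply, hcleft.map_one, mul_one] at h0
  have he1 : conv γ γ' 1 = 1 := by
    rw [conv_one_apply, hcleft.map_one, hγ'1, one_mul]
  -- equation (31)
  have eq31 : conv γ (conv γ' γ) = γ := by
    ext h
    obtain ⟨S, hS⟩ := TensorProduct.exists_finset (Coalgebra.comul (R := k) h)
    have h7 := hcleft.seven 1 h Unit (H × H) Finset.univ S (fun _ => 1) (fun _ => 1)
      Prod.fst Prod.snd comul_one_sum hS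
    simp only [one_mul, he1] at h7
    rw [conv_apply_sum γ (conv γ' γ) h S Prod.fst Prod.snd hS, h7]
    simp
  refine ⟨eq31, ?_, ?_, hcleft.conv_coinv, ?_⟩
  · calc conv (conv γ γ') (conv γ γ')
        = conv γ (conv γ' (conv γ γ')) := by rw [conv_assoc]
      _ = conv γ (conv (conv γ' γ) γ') := by rw [← conv_assoc γ' γ γ']
      _ = conv (conv γ (conv γ' γ)) γ' := by rw [← conv_assoc]
      _ = conv γ γ' := by rw [eq31]
  · rw [conv_assoc, eq31]
  · intro T hT
    set T' : H ⊗[k] H →ₗ[k] B := T ∘ₗ (TensorProduct.lid k H).toLinearMap ∘ₗ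
      (Coalgebra.counit (R := k)).rTensor H with hT'def
    have hT'tmul : ∀ (a b : H), T' (a ⊗ₜ[k] b) = Coalgebra.counit (R := k) a • T b := by
      intro a b
      simp [hT'def, LinearMap.rTensor_tmul, TensorProduct.lid_tmul]
    have hT'coinv : ∀ x, ρ (T' x) = T' x ⊗ₜ[k] 1 := by
      intro x
      induction x using TensorProduct.induction_on with
      | zero => simp
      | tmul a b =>
          rw [hT'tmul, map_smul, hT b, TensorProduct.smul_tmul']
      | add x y hx hy =>
          rw [map_add, map_add, hx, hy, TensorProduct.add_tmul]
    have hc := hcleft.conv_central T' hT'coinv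
    ext h
    obtain ⟨S, hS⟩ := TensorProduct.exists_finset (Coalgebra.comul (R := k) h)
    have hcomulTwo : comulTwo ((1:H) ⊗ₜ[k] h)
        = ∑ p ∈ S, ((1:H) ⊗ₜ[k] p.1) ⊗ₜ[k] ((1:H) ⊗ₜ[k] p.2) := by
      simp only [comulTwo, LinearMap.comp_apply, TensorProduct.map_tmul, comul_one', hS]
      rw [TensorProduct.tmul_sum, map_sum]
      simp [TensorProduct.tensorTensorTensorComm_tmul]
    have hc' := congrArg (fun F : H ⊗[k] H →ₗ[k] B => F ((1:H) ⊗ₜ[k] h)) hc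
    simp only [conv2, LinearMap.comp_apply, hcomulTwo, map_sum] at hc'
    have lhs_eq : ∀ (U V : H →ₗ[k] B), conv U V h =
        ∑ p ∈ S, U p.1 * V p.2 := fun U V =>
      conv_apply_sum U V h S Prod.fst Prod.snd hS
    rw [lhs_eq (conv γ γ') T, lhs_eq T (conv γ γ')]
    calc ∑ p ∈ S, conv γ γ' p.1 * T p.2
        = ∑ p ∈ S, (LinearMap.mul' k B)
            ((TensorProduct.map (conv γ γ' ∘ₗ LinearMap.mul' k H) T')
              (((1:H) ⊗ₜ[k] p.1) ⊗ₜ[k] ((1:H) ⊗ₜ[k] p.2))) := by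
          refine Finset.sum_congr rfl fun p _ => ?_
          simp [hT'tmul, LinearMap.mul'_apply, Bialgebra.counit_one]
      _ = ∑ p ∈ S, (LinearMap.mul' k B)
            ((TensorProduct.map T' (conv γ γ' ∘ₗ LinearMap.mul' k H))
              (((1:H) ⊗ₜ[k] p.1) ⊗ₜ[k] ((1:H) ⊗ₜ[k] p.2))) := hc'
      _ = ∑ p ∈ S, T p.1 * conv γ γ' p.2 := by
          refine Finset.sum_congr rfl fun p _ => ?_
          simp [hT'tmul, LinearMap.mul'_apply, Bialgebra.counit_one]
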